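/- Assume Conjecture 1: there exists N such that for every n ≥ N and every positive integer m, if m+1, ..., m+n are all composite then ∏_{i=1}^n (m+i) = n! · ∏_{i=1}^n a_i for some positive integers a_1, ..., a_n with a_i dividing m+i, a_i > 1 for each i, and gcd(a_i, a_j) = 1 for all i ≠ j. Then there exists N' such that for every n ≥ N' and every divisor d > 1 of ∏_{n < p < 2n, p prime} p, there is a prime in the interval (d − n, d + n]. -/

import Mathlib

/-- **Conjecture 1.** For all sufficiently large `n`, the product of any `n`
consecutive composite numbers `m+1, ..., m+n` can be written as
`n! · a_1 ⋯ a_n` with `a_i ∣ m+i`, `a_i > 1`, and the `a_i` pairwise coprime. -/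
def Conjecture1 : Prop :=
  ∃ N : ℕ, ∀ n : ℕ, N ≤ n → ∀ m : ℕ, 0 < m →
    (∀ i ∈ Finset.Icc 1 n, 1 < m + i ∧ ¬ (m + i).Prime) →
    ∃ a : ℕ → ℕ,
      (∏ i ∈ Finset.Icc 1 n, (m + i)) =
        Nat.factorial n * ∏ i ∈ Finset.Icc 1 n, a i ∧
      (∀ i ∈ Finset.Icc 1 n, a i ∣ (m + i) ∧ 1 < a i) ∧
      (∀ i ∈ Finset.Icc 1 n, ∀ j ∈ Finset.Icc 1 n, i ≠ j →
        Nat.Coprime (a i) (a j))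

/-- A product of distinct primes is squarefree. -/
lemma squarefree_prod_primes (s : Finset ℕ) (hs : ∀ p ∈ s, p.Prime) :
    Squarefree (∏ p ∈ s, p) := by
  have h0 : ∀ p ∈ s, p ≠ 0 := fun p hp => (hs p hp).ne_zero
  apply Nat.squarefree_of_factorization_le_one (Finset.prod_ne_zero_iff.mpr h0)
  intro q
  rw [Nat.factorization_prod h0, Finset.sum_apply']
  have : ∀ p ∈ s, (Nat.factorization p) q = if p = q then 1 else 0 := by
    intro p hp
    rw [(hs p hp).factorization, Finsupp.single_apply]
  rw [Finset.sum_congr rfl this, Finset.sum_ite_eq' s q (fun _ => 1)]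
  split <;> omega

/-- Assuming Conjecture 1, for all sufficiently large `n`, every divisor `d > 1`
of `∏_{n < p < 2n} p` has a prime in the interval `(d − n, d + n]`. -/
theorem exists_prime_near_divisor_of_conjecture1 (hC : Conjecture1) :
    ∃ N' : ℕ, ∀ n : ℕ, N' ≤ n → ∀ d : ℕ, 1 < d →
      d ∣ (∏ p ∈ Finset.filter Nat.Prime (Finset.Ioo n (2 * n)), p) →
      ∃ p : ℕ, p.Prime ∧ d - n < p ∧ p ≤ d + n := by
  obtain ⟨N, hN⟩ := hC
  refine ⟨max N 2, fun n hn d hd hdvd => ?_⟩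
  have hn2 : 2 ≤ n := le_trans (le_max_right N 2) hn
  have hnN : N ≤ n := le_trans (le_max_left N 2) hn
  have hSprime : ∀ p ∈ Finset.filter Nat.Prime (Finset.Ioo n (2 * n)), p.Prime :=
    fun p hp => (Finset.mem_filter.mp hp).2
  have hmem : ∀ q : ℕ, q.Prime → q ∣ d → n < q ∧ q < 2 * n := by
    intro q hq hqd
    obtain ⟨p, hpS, hqp⟩ := hq.prime.exists_mem_finset_dvd (hqd.trans hdvd)
    have hqeq : q = p := (Nat.prime_dvd_prime_iff_eq hq (hSprime p hpS)).mp hqp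
    subst hqeq
    exact Finset.mem_Ioo.mp (Finset.mem_filter.mp hpS).1
  by_cases hdp : d.Prime
  · exact ⟨d, hdp, by have := hmem d hdp dvd_rfl; omega, by omega⟩
  have hd0 : d ≠ 0 := by omega
  have hsq : Squarefree d :=
    Squarefree.squarefree_of_dvd hdvd (squarefree_prod_primes _ hSprime)
  -- d is a product of at least two primes each greater than n
  have hdlarge : 2 * n + 1 ≤ d := by
    have hq0p : d.minFac.Prime := Nat.minFac_prime (by omega)
    have hq0 : n < d.minFac := (hmem _ hq0p d.minFac_dvd).1
    obtain ⟨k, hk⟩ := d.minFac_dvd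
    have hk0 : k ≠ 0 := by rintro rfl; simp at hk; omega
    have hk1 : 1 < k := by
      rcases Nat.lt_or_ge k 2 with h | h
      · have : k = 1 := by omega
        subst this
        rw [mul_one] at hk
        exact absurd (hk ▸ hq0p) hdp
      · omega
    have hq1p : k.minFac.Prime := Nat.minFac_prime (by omega)
    have hq1 : n < k.minFac :=
      (hmem _ hq1p ((k.minFac_dvd).trans (by rw [hk]; exact dvd_mul_left k d.minFac))).1
    have hkk : k.minFac ≤ k := Nat.minFac_le (by omega)
    have hmul : (n + 1) * (n + 1) ≤ d.minFac * k := Nat.mul_le_mul (by omega) (by omega)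
    nlinarith [hk]
  by_contra hno
  push_neg at hno
  set m := d - n with hm
  have hmd : m + n = d := by omega
  have hcomp : ∀ i ∈ Finset.Icc 1 (2 * n), 1 < m + i ∧ ¬ (m + i).Prime := by
    intro i hi
    have hi' := Finset.mem_Icc.mp hi
    refine ⟨by omega, fun hp => ?_⟩
    have := hno (m + i) hp (by omega)
    omega
  obtain ⟨a, hprod, hai, -⟩ := hN (2 * n) (by omega) m (by omega) hcomp
  have hnmem : n ∈ Finset.Icc 1 (2 * n) := Finset.mem_Icc.mpr (by omega)
  obtain ⟨hadvd, ha1⟩ := hai n hnmem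
  set q := (a n).minFac with hqdef
  have hqp : q.Prime := Nat.minFac_prime (by omega)
  have hqan : q ∣ a n := Nat.minFac_dvd _
  have hqd : q ∣ d := hmd ▸ hqan.trans hadvd
  have hqn := hmem q hqp hqd
  have hL : (∏ i ∈ Finset.Icc 1 (2 * n), (m + i)).factorization q = 1 := by
    rw [Nat.factorization_prod (fun i hi => by have := (hcomp i hi).1; omega),
      Finset.sum_apply', Finset.sum_eq_single n]
    · rw [hmd]
      have h1 : d.factorization q ≤ 1 := hsq.natFactorization_le_one q
      have h2 : 0 < d.factorization q := hqp.factorization_pos_of_dvd hd0 hqd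
      omega
    · intro i hi hne
      apply Nat.factorization_eq_zero_of_not_dvd
      intro hqi
      have hqd' : q ∣ m + n := hmd ▸ hqd
      have hi' := Finset.mem_Icc.mp hi
      rcases Nat.lt_or_ge i n with h | h
      · have h3 : q ∣ (m + n) - (m + i) := Nat.dvd_sub hqd' hqi
        have h4 : m + n - (m + i) = n - i := by omega
        have := Nat.le_of_dvd (by omega) (h4 ▸ h3)
        omega
      · have h3 : q ∣ (m + i) - (m + n) := Nat.dvd_sub hqi hqd'
        have h4 : m + i - (m + n) = i - n := by omega
        have h5 : 0 < i - n := by omega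
        have := Nat.le_of_dvd h5 (h4 ▸ h3)
        omega
    · intro h; exact absurd hnmem h
  have hR : 2 ≤ ((2 * n).factorial * ∏ i ∈ Finset.Icc 1 (2 * n), a i).factorization q := by
    have hf0 : (2 * n).factorial ≠ 0 := Nat.factorial_ne_zero _
    have hp0 : (∏ i ∈ Finset.Icc 1 (2 * n), a i) ≠ 0 := by
      apply Finset.prod_ne_zero_iff.mpr
      intro i hi
      have := (hai i hi).2
      omega
    rw [Nat.factorization_mul hf0 hp0, Finsupp.add_apply]
    have h1 : 0 < ((2 * n).factorial).factorization q :=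
      hqp.factorization_pos_of_dvd hf0 (Nat.dvd_factorial hqp.pos (by omega))
    have h2 : 0 < (∏ i ∈ Finset.Icc 1 (2 * n), a i).factorization q :=
      hqp.factorization_pos_of_dvd hp0 (hqan.trans (Finset.dvd_prod_of_mem a hnmem))
    omega
  rw [hprod] at hL
  omega
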